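/- Let x⁽¹⁾, …, x⁽ⁿ⁾ ∈ ℝᵈ be draws with scores α⁽¹⁾, …, α⁽ⁿ⁾ ∈ ℝᵈ, and let D̂(A, μ) = (1/n)Σᵢ ‖Aᵀα⁽ⁱ⁾ + A⁻¹(x⁽ⁱ⁾ - μ)‖² be the empirical Fisher divergence, defined for invertible A ∈ ℝ^{d×d} and μ ∈ ℝᵈ. If (A, μ) is a critical point of D̂ (equivalently, a global minimizer at which the derivative vanishes), then, writing M = (AAᵀ)⁻¹, C_x = (1/n)Σᵢ(x⁽ⁱ⁾ - x̄)(x⁽ⁱ⁾ - x̄)ᵀ and C_α = (1/n)Σᵢ(α⁽ⁱ⁾ - ᾱ)(α⁽ⁱ⁾ - ᾱ)ᵀ, it holds that M C_x M = C_α and μ = x̄ + M⁻¹ᾱ, where x̄ and ᾱ are the sample means of draws and scores. -/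

import Mathlib

open Matrix

section FisherAux
variable {d n : ℕ}

variable {d : ℕ}

lemma diffAt_det {M : ℝ → Matrix (Fin d) (Fin d) ℝ} {t₀ : ℝ}
    (h : ∀ i j, DifferentiableAt ℝ (fun t => M t i j) t₀) :
    DifferentiableAt ℝ (fun t => (M t).det) t₀ := by
  simp only [Matrix.det_apply]
  refine DifferentiableAt.fun_sum fun σ _ => ?_
  simp only [Units.smul_def, zsmul_eq_mul]
  exact (DifferentiableAt.fun_finsetProd fun i _ => h (σ i) i).const_mul _

lemma diffAt_adjugate {M : ℝ → Matrix (Fin d) (Fin d) ℝ} {t₀ : ℝ}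
    (h : ∀ i j, DifferentiableAt ℝ (fun t => M t i j) t₀) (i j : Fin d) :
    DifferentiableAt ℝ (fun t => (M t).adjugate i j) t₀ := by
  simp only [adjugate_apply]
  refine diffAt_det fun a b => ?_
  by_cases hab : a = j
  · simp [updateRow_apply, hab]
  · simpa [updateRow_apply, hab] using h a b

lemma diffAt_inv {M : ℝ → Matrix (Fin d) (Fin d) ℝ} {t₀ : ℝ}
    (h : ∀ i j, DifferentiableAt ℝ (fun t => M t i j) t₀)
    (hdet : (M t₀).det ≠ 0) (i j : Fin d) :
    DifferentiableAt ℝ (fun t => (M t)⁻¹ i j) t₀ := by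
  simp only [Matrix.inv_def, Ring.inverse_eq_inv', Matrix.smul_apply, smul_eq_mul]
  exact ((diffAt_det h).inv hdet).mul (diffAt_adjugate h i j)

lemma entry_diff (A H : Matrix (Fin d) (Fin d) ℝ) (a b : Fin d) (t₀ : ℝ) :
    DifferentiableAt ℝ (fun t : ℝ => (A + t • H) a b) t₀ := by
  simp only [Matrix.add_apply, Matrix.smul_apply, smul_eq_mul]
  exact (differentiableAt_const _).add (differentiableAt_id.mul (differentiableAt_const _))

lemma entry_hasDerivAt (A H : Matrix (Fin d) (Fin d) ℝ) (a b : Fin d) :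
    HasDerivAt (fun t : ℝ => (A + t • H) a b) (H a b) 0 := by
  simp only [Matrix.add_apply, Matrix.smul_apply, smul_eq_mul]
  simpa using (hasDerivAt_id (0:ℝ)).mul_const (H a b)

lemma inv_entry_hasDerivAt (A H : Matrix (Fin d) (Fin d) ℝ) (hA : IsUnit A.det) (i j : Fin d) :
    HasDerivAt (fun t : ℝ => (A + t • H)⁻¹ i j) ((-(A⁻¹ * H * A⁻¹)) i j) 0 := by
  have hdetA : A.det ≠ 0 := by
    intro h; rw [h] at hA; exact (not_isUnit_zero : ¬ IsUnit (0:ℝ)) hA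
  have hdet0 : (A + (0:ℝ) • H).det ≠ 0 := by simpa using hdetA
  have hdiff : ∀ a b, DifferentiableAt ℝ (fun t : ℝ => (A + t • H)⁻¹ a b) 0 :=
    fun a b => diffAt_inv (fun a b => entry_diff A H a b 0) hdet0 a b
  set W : Matrix (Fin d) (Fin d) ℝ :=
    Matrix.of (fun a b => deriv (fun t : ℝ => (A + t • H)⁻¹ a b) 0) with hWdef
  have hW : ∀ a b, HasDerivAt (fun t : ℝ => (A + t • H)⁻¹ a b) (W a b) 0 :=
    fun a b => (hdiff a b).hasDerivAt
  have hev : ∀ᶠ t : ℝ in nhds 0, ((A + t • H)⁻¹ * (A + t • H)) = 1 := by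
    have hcont : ContinuousAt (fun t : ℝ => (A + t • H).det) 0 :=
      (diffAt_det (fun a b => entry_diff A H a b 0)).continuousAt
    exact (hcont.eventually_ne hdet0).mono fun t ht =>
      Matrix.nonsing_inv_mul _ (isUnit_iff_ne_zero.mpr ht)
  have hWA : W * A + A⁻¹ * H = 0 := by
    ext a b
    have h1 : ∀ k, HasDerivAt (fun t : ℝ => (A + t • H)⁻¹ a k * (A + t • H) k b)
        (W a k * A k b + A⁻¹ a k * H k b) 0 := by
      intro k
      have h3 := (hW a k).mul (entry_hasDerivAt A H k b)
      simp only [zero_smul, add_zero] at h3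
      exact h3
    have hsum : HasDerivAt (fun t : ℝ => ∑ k, (A + t • H)⁻¹ a k * (A + t • H) k b)
        (∑ k, (W a k * A k b + A⁻¹ a k * H k b)) 0 := HasDerivAt.fun_sum fun k _ => h1 k
    have heq : (fun t : ℝ => ∑ k, (A + t • H)⁻¹ a k * (A + t • H) k b) =ᶠ[nhds 0]
        (fun _ : ℝ => (1 : Matrix (Fin d) (Fin d) ℝ) a b) :=
      hev.mono fun t ht => by
        show (∑ k, (A + t • H)⁻¹ a k * (A + t • H) k b) = (1 : Matrix (Fin d) (Fin d) ℝ) a b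
        rw [← Matrix.mul_apply, ht]
    have hconst : HasDerivAt (fun t : ℝ => ∑ k, (A + t • H)⁻¹ a k * (A + t • H) k b) 0 0 :=
      (hasDerivAt_const (0:ℝ) _).congr_of_eventuallyEq heq
    have h0 : ∑ k, (W a k * A k b + A⁻¹ a k * H k b) = 0 := hsum.unique hconst
    simpa [Matrix.add_apply, Matrix.mul_apply, Finset.sum_add_distrib] using h0
  have h1 : W * A = -(A⁻¹ * H) := by rw [eq_neg_iff_add_eq_zero]; exact hWA
  have h2 := congrArg (fun M => M * A⁻¹) h1
  have hWeq : W = -(A⁻¹ * H * A⁻¹) := by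
    simpa [Matrix.mul_assoc, Matrix.mul_nonsing_inv A hA, neg_mul] using h2
  exact hWeq ▸ hW i j

variable {d n : ℕ}

lemma vmv_mul_left (M : Matrix (Fin d) (Fin d) ℝ) (a b : Fin d → ℝ) :
    M * vecMulVec a b = vecMulVec (M *ᵥ a) b := by
  ext i j
  simp [Matrix.mul_apply, vecMulVec_apply, mulVec, dotProduct, Finset.sum_mul, mul_assoc]

lemma vmv_mul_right (M : Matrix (Fin d) (Fin d) ℝ) (a b : Fin d → ℝ) :
    vecMulVec a b * M = vecMulVec a (Mᵀ *ᵥ b) := by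
  ext i j
  simp [Matrix.mul_apply, vecMulVec_apply, mulVec, dotProduct, Finset.mul_sum,
    transpose_apply, mul_comm, mul_left_comm]

lemma vmv_add_left (a b c : Fin d → ℝ) :
    vecMulVec (a + b) c = vecMulVec a c + vecMulVec b c := by
  ext i j; simp [vecMulVec_apply, add_mul]

lemma vmv_add_right (a b c : Fin d → ℝ) :
    vecMulVec a (b + c) = vecMulVec a b + vecMulVec a c := by
  ext i j; simp [vecMulVec_apply, mul_add]

lemma mulVec_sum' (M : Matrix (Fin d) (Fin d) ℝ) (u : Fin n → Fin d → ℝ) :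
    M *ᵥ (∑ i, u i) = ∑ i, M *ᵥ u i := by
  funext l
  simp only [mulVec, dotProduct, Finset.sum_apply, Finset.mul_sum]
  rw [Finset.sum_comm]

lemma vmv_sum_left (u : Fin n → Fin d → ℝ) (c : Fin d → ℝ) :
    ∑ i, vecMulVec (u i) c = vecMulVec (∑ i, u i) c := by
  ext a b; simp [Matrix.sum_apply, vecMulVec_apply, Finset.sum_mul]

lemma vmv_sum_right (c : Fin d → ℝ) (u : Fin n → Fin d → ℝ) :
    ∑ i, vecMulVec c (u i) = vecMulVec c (∑ i, u i) := by
  ext a b; simp [Matrix.sum_apply, vecMulVec_apply, Finset.mul_sum]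

lemma fisher_key (hn : 0 < n) (x α : Fin n → Fin d → ℝ)
    (Dhat : Matrix (Fin d) (Fin d) ℝ → (Fin d → ℝ) → ℝ)
    (hDhat : ∀ B μ, Dhat B μ =
      (1 / (n : ℝ)) * ∑ i, ∑ j, (Bᵀ.mulVec (α i) j + B⁻¹.mulVec (x i - μ) j) ^ 2)
    (A : Matrix (Fin d) (Fin d) ℝ) (hA : IsUnit A.det) (μ : Fin d → ℝ)
    (hcrit : ∀ (H : Matrix (Fin d) (Fin d) ℝ) (v : Fin d → ℝ),
      HasDerivAt (fun t : ℝ => Dhat (A + t • H) (μ + t • v)) 0 0)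
    (H : Matrix (Fin d) (Fin d) ℝ) (v : Fin d → ℝ) :
    ∑ i, ∑ j, (Aᵀ *ᵥ α i + A⁻¹ *ᵥ (x i - μ)) j *
      ((Hᵀ *ᵥ α i) j + ((-(A⁻¹ * H * A⁻¹)) *ᵥ (x i - μ)) j - (A⁻¹ *ᵥ v) j) = 0 := by
  set r : Fin n → Fin d → ℝ := fun i => Aᵀ *ᵥ α i + A⁻¹ *ᵥ (x i - μ) with hr
  set q : Fin n → Fin d → ℝ := fun i j =>
    (Hᵀ *ᵥ α i) j + ((-(A⁻¹ * H * A⁻¹)) *ᵥ (x i - μ)) j - (A⁻¹ *ᵥ v) j with hq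
  have hφ : ∀ i j, HasDerivAt
      (fun t : ℝ => ((A + t • H)ᵀ *ᵥ α i) j + ((A + t • H)⁻¹ *ᵥ (x i - (μ + t • v))) j)
      (q i j) 0 := by
    intro i j
    have hfun : (fun t : ℝ => ((A + t • H)ᵀ *ᵥ α i) j + ((A + t • H)⁻¹ *ᵥ (x i - (μ + t • v))) j)
        = fun t : ℝ => (∑ k, (A + t • H) k j * α i k)
            + ∑ k, (A + t • H)⁻¹ j k * (x i k - (μ k + t * v k)) := by
      funext t
      simp [mulVec, dotProduct, transpose_apply]
    rw [hfun]
    have hp1 : HasDerivAt (fun t : ℝ => ∑ k, (A + t • H) k j * α i k)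
        (∑ k, H k j * α i k) 0 :=
      HasDerivAt.fun_sum fun k _ => (entry_hasDerivAt A H k j).mul_const (α i k)
    have hp2 : HasDerivAt (fun t : ℝ => ∑ k, (A + t • H)⁻¹ j k * (x i k - (μ k + t * v k)))
        (∑ k, ((-(A⁻¹ * H * A⁻¹)) j k * (x i k - μ k) + A⁻¹ j k * (-(v k)))) 0 := by
      refine HasDerivAt.fun_sum fun k _ => ?_
      have haff : HasDerivAt (fun t : ℝ => x i k - (μ k + t * v k)) (-(v k)) 0 := by
        simpa using (HasDerivAt.const_sub (x i k)
          ((hasDerivAt_const (0:ℝ) (μ k)).add ((hasDerivAt_id (0:ℝ)).mul_const (v k))))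
      have h3 := (inv_entry_hasDerivAt A H hA j k).mul haff
      simp only [zero_smul, add_zero, zero_mul] at h3
      exact h3
    have := hp1.add hp2
    refine this.congr_deriv ?_
    simp [hq, mulVec, dotProduct, Finset.sum_add_distrib, mul_neg, Pi.sub_apply,
      sub_eq_add_neg, add_assoc]
  have hG : HasDerivAt (fun t : ℝ => Dhat (A + t • H) (μ + t • v))
      ((1 / (n : ℝ)) * ∑ i, ∑ j, 2 * r i j * q i j) 0 := by
    have h1 : (fun t : ℝ => Dhat (A + t • H) (μ + t • v)) = fun t : ℝ =>
        (1 / (n : ℝ)) * ∑ i, ∑ j,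
          (((A + t • H)ᵀ *ᵥ α i) j + ((A + t • H)⁻¹ *ᵥ (x i - (μ + t • v))) j) ^ 2 := by
      funext t; rw [hDhat]
    rw [h1]
    refine HasDerivAt.const_mul _ (HasDerivAt.fun_sum fun i _ => HasDerivAt.fun_sum fun j _ => ?_)
    have h2 := (hφ i j).pow 2
    refine h2.congr_deriv ?_
    simp [hr, zero_smul, pow_one]
  have h0 := (hcrit H v).unique hG
  have hT : (∑ i, ∑ j, 2 * r i j * q i j) = 2 * ∑ i, ∑ j, r i j * q i j := by
    simp [Finset.mul_sum, mul_assoc]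
  rw [hT] at h0
  have hne : (n : ℝ) ≠ 0 := Nat.cast_ne_zero.mpr hn.ne'
  have := h0.symm
  field_simp at this
  have hT2 : (∑ i, ∑ j, r i j * q i j) = 0 := by linarith
  exact hT2

end FisherAux

/-- If `(A, μ)` (with `A` invertible) is a critical point of the
empirical Fisher divergence `D̂(A, μ) = (1/n)Σᵢ ‖Aᵀα⁽ⁱ⁾ + A⁻¹(x⁽ⁱ⁾ - μ)‖²`
(all directional derivatives vanish), then, with `M = (AAᵀ)⁻¹`,
`M C_x M = C_α` and `μ = x̄ + M⁻¹ᾱ`, where `C_x, C_α` are the 1/n-normalized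
sample covariances of draws and scores. -/
theorem fisher_hmc_dense_critical_point
    (d n : ℕ) (hn : 0 < n)
    (x α : Fin n → Fin d → ℝ)
    (xbar αbar : Fin d → ℝ)
    (hxbar : xbar = (1 / (n : ℝ)) • ∑ i, x i)
    (hαbar : αbar = (1 / (n : ℝ)) • ∑ i, α i)
    (Cx Cα : Matrix (Fin d) (Fin d) ℝ)
    (hCx : Cx = (1 / (n : ℝ)) • ∑ i, Matrix.vecMulVec (x i - xbar) (x i - xbar))
    (hCα : Cα = (1 / (n : ℝ)) • ∑ i, Matrix.vecMulVec (α i - αbar) (α i - αbar))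
    (Dhat : Matrix (Fin d) (Fin d) ℝ → (Fin d → ℝ) → ℝ)
    (hDhat : ∀ B μ, Dhat B μ =
      (1 / (n : ℝ)) * ∑ i, ∑ j, (Bᵀ.mulVec (α i) j + B⁻¹.mulVec (x i - μ) j) ^ 2)
    (A : Matrix (Fin d) (Fin d) ℝ) (hA : IsUnit A.det) (μ : Fin d → ℝ)
    (hcrit : ∀ (H : Matrix (Fin d) (Fin d) ℝ) (v : Fin d → ℝ),
      HasDerivAt (fun t : ℝ => Dhat (A + t • H) (μ + t • v)) 0 0) :
    (A * Aᵀ)⁻¹ * Cx * (A * Aᵀ)⁻¹ = Cα ∧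
    μ = xbar + ((A * Aᵀ)⁻¹)⁻¹.mulVec αbar := by
  have key := fisher_key hn x α Dhat hDhat A hA μ hcrit
  have hne : (n : ℝ) ≠ 0 := Nat.cast_ne_zero.mpr hn.ne'
  have hAt : IsUnit Aᵀ.det := by rwa [det_transpose]
  have hAAt : IsUnit (A * Aᵀ).det := by rw [det_mul, det_transpose]; exact hA.mul hA
  have hM'eq : (A * Aᵀ)⁻¹ = (A⁻¹)ᵀ * A⁻¹ := by
    rw [Matrix.mul_inv_rev, transpose_nonsing_inv]
  set y : Fin n → Fin d → ℝ := fun i => x i - μ with hy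
  set r : Fin n → Fin d → ℝ := fun i => Aᵀ *ᵥ α i + A⁻¹ *ᵥ (x i - μ) with hr
  set M' : Matrix (Fin d) (Fin d) ℝ := (A⁻¹)ᵀ * A⁻¹ with hM'
  -- mean sums
  have hsumx : ∑ i, x i = (n : ℝ) • xbar := by
    rw [hxbar, smul_smul]; field_simp; rw [one_smul]
  have hsumα : ∑ i, α i = (n : ℝ) • αbar := by
    rw [hαbar, smul_smul]; field_simp; rw [one_smul]
  -- E1 : sum of residuals is zero
  have hsum_r : ∑ i, r i = 0 := by
    funext l
    have h := key 0 (A *ᵥ Pi.single l 1)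
    have hAv : A⁻¹ *ᵥ (A *ᵥ Pi.single l 1) = Pi.single l 1 := by
      rw [mulVec_mulVec, nonsing_inv_mul A hA, one_mulVec]
    rw [hAv] at h
    simp only [transpose_zero, zero_mulVec, Pi.zero_apply, mul_zero, zero_mul, neg_zero,
      zero_add, zero_sub, mul_neg] at h
    have h2 : ∀ i : Fin n, ∑ j, -(r i j * (Pi.single l 1 : Fin d → ℝ) j) = -(r i l) := by
      intro i
      simp [Pi.single_apply, mul_ite]
    rw [Finset.sum_congr rfl (fun i _ => h2 i)] at h
    simp only [Finset.sum_neg_distrib, neg_eq_zero] at h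
    simpa [Finset.sum_apply] using h
  -- mean equation
  have hmean : μ = xbar + (A * Aᵀ) *ᵥ αbar := by
    have hsub : ∑ i, (x i - μ) = (n:ℝ) • (xbar - μ) := by
      rw [Finset.sum_sub_distrib, hsumx, Finset.sum_const, Finset.card_univ,
        Fintype.card_fin, smul_sub]
      congr 1
      ext l; simp [nsmul_eq_mul]
    have hsplit : ∑ i, r i = Aᵀ *ᵥ ((n:ℝ) • αbar) + A⁻¹ *ᵥ ((n:ℝ) • (xbar - μ)) := by
      rw [hr, Finset.sum_add_distrib, ← mulVec_sum', ← mulVec_sum', hsumα, hsub]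
    rw [hsplit] at hsum_r
    rw [mulVec_smul, mulVec_smul, ← smul_add] at hsum_r
    have h3 : Aᵀ *ᵥ αbar + A⁻¹ *ᵥ (xbar - μ) = 0 := by
      have := smul_eq_zero.mp hsum_r
      tauto
    have h4 : A *ᵥ (Aᵀ *ᵥ αbar) + (xbar - μ) = 0 := by
      have := congrArg (fun w => A *ᵥ w) h3
      simpa [mulVec_add, mulVec_mulVec, mul_nonsing_inv A hA, one_mulVec, mulVec_zero] using this
    have h5 : (A * Aᵀ) *ᵥ αbar = μ - xbar := by
      rw [← mulVec_mulVec]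
      linear_combination (norm := (funext l; simp [Pi.sub_apply]; ring_nf)) h4
    funext l
    have := congrFun h5 l
    simp only [Pi.add_apply, Pi.sub_apply] at this ⊢
    linarith
  -- E2 : star equation
  have star : ∀ k l : Fin d, ∑ i, α i k * r i l
      = ∑ i, ((A⁻¹)ᵀ *ᵥ r i) k * ((A⁻¹ *ᵥ (x i - μ)) l) := by
    intro k l
    set H : Matrix (Fin d) (Fin d) ℝ := vecMulVec (Pi.single k 1) (Pi.single l 1) with hH
    have h := key H 0
    have e1 : ∀ i, Hᵀ *ᵥ α i = α i k • (Pi.single l 1 : Fin d → ℝ) := by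
      intro i
      funext j
      simp [hH, mulVec, dotProduct, transpose_apply, vecMulVec_apply, Pi.single_apply,
        mul_ite, ite_mul, Finset.sum_ite_eq, Finset.sum_ite_eq', mul_comm]
    have e2 : ∀ i, (-(A⁻¹ * H * A⁻¹)) *ᵥ (x i - μ)
        = -(((A⁻¹ *ᵥ (x i - μ)) l) • fun j => A⁻¹ j k) := by
      intro i
      funext j
      simp [hH, mulVec, dotProduct, Matrix.mul_apply, vecMulVec_apply, Pi.single_apply,
        mul_ite, ite_mul, Finset.sum_ite_eq, Finset.sum_ite_eq', Finset.mul_sum,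
        Finset.sum_mul, mul_comm, mul_left_comm]
      exact Finset.sum_congr rfl fun m _ => (mul_assoc _ _ _).symm
    have hinner : ∀ i, (∑ j, r i j *
        ((Hᵀ *ᵥ α i) j + ((-(A⁻¹ * H * A⁻¹)) *ᵥ (x i - μ)) j - (A⁻¹ *ᵥ (0 : Fin d → ℝ)) j))
        = α i k * r i l - ((A⁻¹)ᵀ *ᵥ r i) k * ((A⁻¹ *ᵥ (x i - μ)) l) := by
      intro i
      have s1 : ∑ j, r i j * (α i k • (Pi.single l 1 : Fin d → ℝ)) j = α i k * r i l := by
        simp [Pi.smul_apply, Pi.single_apply, mul_ite, Finset.sum_ite_eq', mul_comm]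
      have s2 : ∑ j, r i j * (((A⁻¹ *ᵥ (x i - μ)) l) • fun j => A⁻¹ j k) j
          = ((A⁻¹)ᵀ *ᵥ r i) k * ((A⁻¹ *ᵥ (x i - μ)) l) := by
        simp [mulVec, dotProduct, transpose_apply, Finset.mul_sum, Finset.sum_mul,
          mul_comm, mul_left_comm]
        exact Finset.sum_congr rfl fun p _ => Finset.sum_congr rfl fun q _ => by ring
      rw [show (∑ j, r i j *
          ((Hᵀ *ᵥ α i) j + ((-(A⁻¹ * H * A⁻¹)) *ᵥ (x i - μ)) j - (A⁻¹ *ᵥ (0 : Fin d → ℝ)) j))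
          = ∑ j, (r i j * (α i k • (Pi.single l 1 : Fin d → ℝ)) j
              - r i j * (((A⁻¹ *ᵥ (x i - μ)) l) • fun j => A⁻¹ j k) j) from
        Finset.sum_congr rfl fun j _ => by
          rw [e1 i, e2 i]; simp [mulVec_zero]; ring]
      rw [Finset.sum_sub_distrib, s1, s2]
    rw [Finset.sum_congr rfl (fun i _ => hinner i), Finset.sum_sub_distrib, sub_eq_zero] at h
    exact h
  -- matrix form of star
  have hstar : (∑ i, vecMulVec (α i) (r i))
      = ∑ i, vecMulVec ((A⁻¹)ᵀ *ᵥ r i) (A⁻¹ *ᵥ (x i - μ)) := by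
    ext k l
    simp only [Matrix.sum_apply, vecMulVec_apply]
    exact star k l
  -- rewrite both sides
  have hrw1 : ∀ i : Fin n, vecMulVec (α i) (r i)
      = vecMulVec (α i) (α i) * A + vecMulVec (α i) (x i - μ) * (A⁻¹)ᵀ := by
    intro i
    rw [vmv_mul_right, vmv_mul_right, transpose_transpose, ← vmv_add_right]
  have hrw2 : ∀ i : Fin n, vecMulVec ((A⁻¹)ᵀ *ᵥ r i) (A⁻¹ *ᵥ (x i - μ))
      = vecMulVec (α i) (x i - μ) * (A⁻¹)ᵀ + M' * (vecMulVec (x i - μ) (x i - μ) * (A⁻¹)ᵀ) := by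
    intro i
    have e : (A⁻¹)ᵀ *ᵥ r i = α i + M' *ᵥ (x i - μ) := by
      show (A⁻¹)ᵀ *ᵥ (Aᵀ *ᵥ α i + A⁻¹ *ᵥ (x i - μ)) = _
      rw [mulVec_add, mulVec_mulVec, mulVec_mulVec, transpose_nonsing_inv,
        nonsing_inv_mul Aᵀ hAt, one_mulVec, ← transpose_nonsing_inv]
    rw [e, vmv_add_left]
    congr 1
    · rw [vmv_mul_right, transpose_transpose]
    · rw [vmv_mul_right, transpose_transpose, vmv_mul_left]
  have halg : (∑ i, vecMulVec (α i) (α i)) * A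
      = M' * ((∑ i, vecMulVec (x i - μ) (x i - μ)) * (A⁻¹)ᵀ) := by
    have h1 : (∑ i, vecMulVec (α i) (r i))
        = (∑ i, vecMulVec (α i) (α i)) * A + (∑ i, vecMulVec (α i) (x i - μ)) * (A⁻¹)ᵀ := by
      rw [Finset.sum_congr rfl (fun i _ => hrw1 i), Finset.sum_add_distrib,
        Finset.sum_mul, Finset.sum_mul]
    have h2 : (∑ i, vecMulVec ((A⁻¹)ᵀ *ᵥ r i) (A⁻¹ *ᵥ (x i - μ)))
        = (∑ i, vecMulVec (α i) (x i - μ)) * (A⁻¹)ᵀ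
          + M' * ((∑ i, vecMulVec (x i - μ) (x i - μ)) * (A⁻¹)ᵀ) := by
      rw [Finset.sum_congr rfl (fun i _ => hrw2 i), Finset.sum_add_distrib,
        Finset.sum_mul, ← Finset.mul_sum, Finset.sum_mul]
    rw [h1, h2] at hstar
    rw [add_comm ((∑ i, vecMulVec (α i) (α i)) * A) _] at hstar
    exact add_left_cancel hstar
  have hSαM : (∑ i, vecMulVec (α i) (α i))
      = M' * (∑ i, vecMulVec (x i - μ) (x i - μ)) * M' := by
    have h6 := congrArg (fun X => X * A⁻¹) halg
    simp only [Matrix.mul_assoc] at h6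
    rw [mul_nonsing_inv A hA, mul_one] at h6
    rw [h6, hM']
    simp only [Matrix.mul_assoc]
  -- decompositions of second moments
  have hsx0 : ∑ i, (x i - xbar) = (0 : Fin d → ℝ) := by
    rw [Finset.sum_sub_distrib, hsumx, Finset.sum_const, Finset.card_univ, Fintype.card_fin]
    funext l; simp
  have hsα0 : ∑ i, (α i - αbar) = (0 : Fin d → ℝ) := by
    rw [Finset.sum_sub_distrib, hsumα, Finset.sum_const, Finset.card_univ, Fintype.card_fin]
    funext l; simp
  have vmv_zero_left : ∀ c : Fin d → ℝ, vecMulVec (0 : Fin d → ℝ) c = 0 := by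
    intro c; ext a b; simp [vecMulVec_apply]
  have vmv_zero_right : ∀ c : Fin d → ℝ, vecMulVec c (0 : Fin d → ℝ) = 0 := by
    intro c; ext a b; simp [vecMulVec_apply]
  have hdecomp : ∀ (u : Fin n → Fin d → ℝ) (ubar c : Fin d → ℝ),
      (∑ i, (u i - ubar)) = 0 → (∀ i, u i - c = (u i - ubar) + (ubar - c)) →
      (∑ i, vecMulVec (u i - c) (u i - c))
        = (∑ i, vecMulVec (u i - ubar) (u i - ubar)) + (n : ℝ) • vecMulVec (ubar - c) (ubar - c) := by
    intro u ubar c h0 hsplit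
    calc (∑ i, vecMulVec (u i - c) (u i - c))
        = ∑ i, (vecMulVec (u i - ubar) (u i - ubar) + vecMulVec (u i - ubar) (ubar - c)
            + vecMulVec (ubar - c) (u i - ubar) + vecMulVec (ubar - c) (ubar - c)) := by
          refine Finset.sum_congr rfl fun i _ => ?_
          rw [hsplit i, vmv_add_left, vmv_add_right, vmv_add_right]
          abel
      _ = (∑ i, vecMulVec (u i - ubar) (u i - ubar)) + (n : ℝ) • vecMulVec (ubar - c) (ubar - c) := by
          rw [Finset.sum_add_distrib, Finset.sum_add_distrib, Finset.sum_add_distrib,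
            vmv_sum_left, vmv_sum_right, h0, vmv_zero_left, vmv_zero_right,
            Finset.sum_const, Finset.card_univ, Fintype.card_fin]
          simp only [add_zero]
          congr 1
          exact (Nat.cast_smul_eq_nsmul ℝ n (vecMulVec (ubar - c) (ubar - c))).symm
  have hdy : (∑ i, vecMulVec (x i - μ) (x i - μ))
      = (n : ℝ) • Cx + (n : ℝ) • vecMulVec (xbar - μ) (xbar - μ) := by
    have := hdecomp x xbar μ hsx0 (fun i => by funext l; simp [Pi.sub_apply])
    rw [this, hCx, smul_smul]
    congr 1
    rw [mul_one_div, div_self hne, one_smul]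
  have hdα : (∑ i, vecMulVec (α i) (α i))
      = (n : ℝ) • Cα + (n : ℝ) • vecMulVec αbar αbar := by
    have := hdecomp α αbar 0 hsα0 (fun i => by funext l; simp [Pi.sub_apply])
    simp only [sub_zero] at this
    rw [this, hCα, smul_smul]
    congr 1
    rw [mul_one_div, div_self hne, one_smul]
  -- mean vector pushed through M'
  have hMc : M' *ᵥ (xbar - μ) = -αbar := by
    have hc : xbar - μ = -((A * Aᵀ) *ᵥ αbar) := by
      rw [hmean]; funext l; simp
    rw [hc, mulVec_neg, mulVec_mulVec, ← hM'eq, nonsing_inv_mul _ hAAt, one_mulVec]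
  have hMt : M'ᵀ = M' := by rw [hM', transpose_mul, transpose_transpose]
  have hMvmv : M' * vecMulVec (xbar - μ) (xbar - μ) * M' = vecMulVec αbar αbar := by
    rw [vmv_mul_left, vmv_mul_right, hMt, hMc]
    ext a b; simp [vecMulVec_apply]
  -- final assembly
  have hfinal : (n : ℝ) • Cα = (n : ℝ) • (M' * Cx * M') := by
    have h7 : (n : ℝ) • Cα + (n : ℝ) • vecMulVec αbar αbar
        = (n : ℝ) • (M' * Cx * M') + (n : ℝ) • vecMulVec αbar αbar := by
      rw [← hdα, hSαM, hdy]
      rw [Matrix.mul_add, Matrix.add_mul, Matrix.mul_smul, Matrix.mul_smul,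
        Matrix.smul_mul, Matrix.smul_mul, hMvmv]
    exact add_right_cancel h7
  have hC : Cα = M' * Cx * M' := smul_right_injective _ hne hfinal
  constructor
  · rw [hM'eq]; exact hC.symm
  · rw [nonsing_inv_nonsing_inv _ hAAt]; exact hmean
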